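/- For each permutation σ ∈ S_n, define a structure on {1,…,n} by: i ≤_h j iff (i ≤ j and σ(i) ≤ σ(j)), and i ≤_r j iff (i ≤ j and σ(i) ≥ σ(j)). Then ({1,…,n}, ≤_h, ≤_r) is a plane poset, and the resulting map Ψ_n from S_n to the set of plane poset structures on {1,…,n} (whose induced total order x ≤ y iff x ≤_h y or x ≤_r y is the usual order) is a bijection. -/

import Mathlib

/-- Raw data of two relations on `{1,…,n}` (modeled as `Fin n`). -/
structure PlaneData (n : ℕ) where
  leh : Fin n → Fin n → Prop
  ler : Fin n → Fin n → Prop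

/-- The data is a plane poset: both relations are partial orders, and two
distinct elements are comparable for `leh` iff not comparable for `ler`. -/
def IsPlanePoset {n : ℕ} (D : PlaneData n) : Prop :=
  (∀ x, D.leh x x) ∧ (∀ x y, D.leh x y → D.leh y x → x = y) ∧
  (∀ x y z, D.leh x y → D.leh y z → D.leh x z) ∧
  (∀ x, D.ler x x) ∧ (∀ x y, D.ler x y → D.ler y x → x = y) ∧
  (∀ x y z, D.ler x y → D.ler y z → D.ler x z) ∧
  (∀ x y, x ≠ y → ((D.leh x y ∨ D.leh y x) ↔ ¬(D.ler x y ∨ D.ler y x)))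

/-- The induced total order `x ≤ y ↔ (x ≤ₕ y ∨ x ≤ᵣ y)` is the usual order on `Fin n`. -/
def Normalized {n : ℕ} (D : PlaneData n) : Prop :=
  ∀ i j : Fin n, (D.leh i j ∨ D.ler i j) ↔ i ≤ j

/-- The map `Ψₙ` from permutations to plane poset data. -/
def psi {n : ℕ} (σ : Equiv.Perm (Fin n)) : PlaneData n where
  leh i j := i ≤ j ∧ σ i ≤ σ j
  ler i j := i ≤ j ∧ σ j ≤ σ i

lemma PlaneData.ext' {n : ℕ} {D E : PlaneData n}
    (h1 : ∀ i j, D.leh i j ↔ E.leh i j) (h2 : ∀ i j, D.ler i j ↔ E.ler i j) : D = E := by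
  cases D; cases E
  simp only [PlaneData.mk.injEq]
  exact ⟨funext fun i => funext fun j => propext (h1 i j),
         funext fun i => funext fun j => propext (h2 i j)⟩

/-- auxiliary total order -/
def TRel {n : ℕ} (D : PlaneData n) (i j : Fin n) : Prop := D.leh i j ∨ D.ler j i

lemma TRel_lin {n : ℕ} (D : PlaneData n) (h : IsPlanePoset D) :
    (∀ x, TRel D x x) ∧ (∀ x y, TRel D x y → TRel D y x → x = y) ∧
    (∀ x y z, TRel D x y → TRel D y z → TRel D x z) ∧
    (∀ x y, TRel D x y ∨ TRel D y x) := by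
  obtain ⟨hr, ha, ht, hr', ha', ht', hc⟩ := h
  have A : ∀ x y, x ≠ y → D.leh x y → ¬ D.ler x y :=
    fun x y e h1 h2 => (hc x y e).mp (Or.inl h1) (Or.inl h2)
  have A' : ∀ x y, x ≠ y → D.leh x y → ¬ D.ler y x :=
    fun x y e h1 h2 => (hc x y e).mp (Or.inl h1) (Or.inr h2)
  have B : ∀ x y, x ≠ y → ¬ D.leh x y → ¬ D.leh y x → D.ler x y ∨ D.ler y x := by
    intro x y e h1 h2
    by_contra hcon
    rcases (hc x y e).mpr hcon with hl | hl
    · exact h1 hl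
    · exact h2 hl
  refine ⟨fun x => Or.inl (hr x), ?_, ?_, ?_⟩
  · rintro x y (h1 | h1) (h2 | h2)
    · exact ha _ _ h1 h2
    · by_cases e : x = y
      · exact e
      · exact absurd h2 (A x y e h1)
    · by_cases e : x = y
      · exact e
      · exact absurd h1 (A y x (Ne.symm e) h2)
    · exact ha' _ _ h2 h1
  · rintro x y z (h1 | h1) (h2 | h2)
    · exact Or.inl (ht _ _ _ h1 h2)
    · -- h1 : leh x y, h2 : ler z y ; want leh x z ∨ ler z x
      by_cases exy : x = y
      · subst exy; exact Or.inr h2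
      by_cases exz : x = z
      · subst exz; exact Or.inl (hr x)
      by_cases h3 : D.leh x z
      · exact Or.inl h3
      by_cases h4 : D.leh z x
      · -- leh z x, leh x y gives leh z y, contradicting ler z y
        have h5 : D.leh z y := ht _ _ _ h4 h1
        by_cases ezy : z = y
        · exact absurd (ha x y h1 (ezy ▸ h4)) exy
        · exact absurd h2 (A z y ezy h5)
      · rcases B x z exz h3 h4 with h5 | h5
        · -- ler x z, ler z y → ler x y, contradicting leh x y
          exact absurd (ht' _ _ _ h5 h2) (A x y exy h1)
        · exact Or.inr h5
    · -- h1 : ler y x, h2 : leh y z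
      by_cases exy : x = y
      · subst exy; exact Or.inl h2
      by_cases eyz : y = z
      · subst eyz; exact Or.inr h1
      by_cases exz : x = z
      · subst exz; exact Or.inl (hr x)
      by_cases h3 : D.leh x z
      · exact Or.inl h3
      by_cases h4 : D.leh z x
      · -- leh y z, leh z x → leh y x contradicting ler y x
        have h5 : D.leh y x := ht _ _ _ h2 h4
        exact absurd h1 (A y x (Ne.symm exy) h5)
      · rcases B x z exz h3 h4 with h5 | h5
        · -- ler y x, ler x z → ler y z contradicting leh y z
          exact absurd (ht' _ _ _ h1 h5) (A y z eyz h2)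
        · exact Or.inr h5
    · exact Or.inr (ht' _ _ _ h2 h1)
  · intro x y
    by_cases e : x = y
    · subst e; exact Or.inl (Or.inl (hr x))
    by_cases h1 : D.leh x y
    · exact Or.inl (Or.inl h1)
    by_cases h2 : D.leh y x
    · exact Or.inr (Or.inl h2)
    rcases B x y e h1 h2 with h3 | h3
    · exact Or.inr (Or.inr h3)
    · exact Or.inl (Or.inr h3)

theorem stmt3 (n : ℕ) :
    (∀ σ : Equiv.Perm (Fin n), IsPlanePoset (psi σ) ∧ Normalized (psi σ)) ∧
    Function.Injective (psi (n := n)) ∧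
    (∀ D : PlaneData n, IsPlanePoset D → Normalized D →
      ∃ σ : Equiv.Perm (Fin n), psi σ = D) := by
  refine ⟨?_, ?_, ?_⟩
  · intro σ
    constructor
    · refine ⟨fun x => ⟨le_refl _, le_refl _⟩, ?_, ?_, fun x => ⟨le_refl _, le_refl _⟩, ?_, ?_, ?_⟩
      · rintro x y ⟨h1, _⟩ ⟨h2, _⟩; exact le_antisymm h1 h2
      · rintro x y z ⟨h1, h2⟩ ⟨h3, h4⟩; exact ⟨le_trans h1 h3, le_trans h2 h4⟩
      · rintro x y ⟨h1, _⟩ ⟨h2, _⟩; exact le_antisymm h1 h2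
      · rintro x y z ⟨h1, h2⟩ ⟨h3, h4⟩; exact ⟨le_trans h1 h3, le_trans h4 h2⟩
      · intro x y hxy
        have hσ : σ x ≠ σ y := fun e => hxy (σ.injective e)
        constructor
        · rintro (⟨h1, h2⟩ | ⟨h1, h2⟩) (⟨h3, h4⟩ | ⟨h3, h4⟩)
          · exact hσ (le_antisymm h2 h4)
          · exact hxy (le_antisymm h1 h3)
          · exact hxy (le_antisymm h3 h1)
          · exact hσ (le_antisymm h4 h2)
        · intro hn
          rcases le_total x y with hle | hle
          · rcases le_total (σ x) (σ y) with hs | hs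
            · exact Or.inl ⟨hle, hs⟩
            · exact absurd (Or.inl ⟨hle, hs⟩) hn
          · rcases le_total (σ y) (σ x) with hs | hs
            · exact Or.inr ⟨hle, hs⟩
            · exact absurd (Or.inr ⟨hle, hs⟩) hn
    · intro i j
      constructor
      · rintro (⟨h, _⟩ | ⟨h, _⟩) <;> exact h
      · intro hij
        rcases le_total (σ i) (σ j) with hs | hs
        · exact Or.inl ⟨hij, hs⟩
        · exact Or.inr ⟨hij, hs⟩
  · intro σ τ hst
    have hleh := congrArg PlaneData.leh hst
    have hler := congrArg PlaneData.ler hst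
    have key : ∀ i j : Fin n, σ i ≤ σ j ↔ τ i ≤ τ j := by
      intro i j
      rcases le_total i j with hij | hij
      · have h1 : (i ≤ j ∧ σ i ≤ σ j) ↔ (i ≤ j ∧ τ i ≤ τ j) :=
          iff_of_eq (congrFun (congrFun hleh i) j)
        exact ⟨fun hs => (h1.mp ⟨hij, hs⟩).2, fun hs => (h1.mpr ⟨hij, hs⟩).2⟩
      · have h1 : (j ≤ i ∧ σ i ≤ σ j) ↔ (j ≤ i ∧ τ i ≤ τ j) :=
          iff_of_eq (congrFun (congrFun hler j) i)
        exact ⟨fun hs => (h1.mp ⟨hij, hs⟩).2, fun hs => (h1.mpr ⟨hij, hs⟩).2⟩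
    have heq : (τ.symm.trans σ : Fin n ≃ Fin n) = Equiv.refl _ := by
      let f : Fin n ≃o Fin n :=
        { toEquiv := τ.symm.trans σ
          map_rel_iff' := by
            intro a b
            simp only [Equiv.trans_apply]
            exact (key (τ.symm a) (τ.symm b)).trans (by simp) }
      have h2 := Subsingleton.elim f (OrderIso.refl (Fin n))
      have h3 := congrArg (fun (g : Fin n ≃o Fin n) => (g : Fin n ≃ Fin n)) h2
      exact h3
    apply Equiv.ext
    intro i
    have := congrFun (congrArg (fun (e : Fin n ≃ Fin n) => e.toFun) heq) (τ i)
    simpa using this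
  · intro D hD hN
    obtain ⟨Trefl, Tanti, Ttrans, Ttot⟩ := TRel_lin D hD
    have dec : ∀ a b : Fin n, Decidable (TRel D a b) := fun a b => Classical.dec _
    let L : LinearOrder (Fin n) :=
      { le := TRel D
        lt := fun a b => TRel D a b ∧ ¬ TRel D b a
        le_refl := Trefl
        le_trans := Ttrans
        le_antisymm := Tanti
        le_total := Ttot
        lt_iff_le_not_ge := fun _ _ => Iff.rfl
        toDecidableLE := dec
        toDecidableEq := fun a b => Classical.dec _
        toDecidableLT := fun a b => Classical.dec _
        min := fun a b => @ite _ (TRel D a b) (dec a b) a b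
        max := fun a b => @ite _ (TRel D a b) (dec a b) b a
        min_def := fun a b => rfl
        max_def := fun a b => rfl
        compare := fun a b =>
          @compareOfLessAndEq _ a b ⟨fun a b => TRel D a b ∧ ¬ TRel D b a⟩
            (Classical.dec _) (fun a b => Classical.dec _)
        compare_eq_compareOfLessAndEq := fun a b => rfl }
    let e := @monoEquivOfFin (Fin n) _ L n (Fintype.card_fin n)
    let σ : Equiv.Perm (Fin n) := e.toEquiv.symm
    have hkey : ∀ i j : Fin n, σ i ≤ σ j ↔ TRel D i j := by
      intro i j
      have h1 := RelIso.map_rel_iff (f := e) (a := σ i) (b := σ j)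
      rw [show e (σ i) = i from e.toEquiv.apply_symm_apply i,
          show e (σ j) = j from e.toEquiv.apply_symm_apply j] at h1
      exact h1.symm
    refine ⟨σ, ?_⟩
    obtain ⟨hr, ha, ht, hr', ha', ht', hc⟩ := hD
    have hlehN : ∀ i j, D.leh i j → i ≤ j := fun i j hl => (hN i j).mp (Or.inl hl)
    have hlerN : ∀ i j, D.ler i j → i ≤ j := fun i j hl => (hN i j).mp (Or.inr hl)
    have hL : ∀ i j, (psi σ).leh i j ↔ D.leh i j := by
      intro i j
      constructor
      · rintro ⟨hij, hs⟩
        rcases (hkey i j).mp hs with hl | hl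
        · exact hl
        · have : i = j := le_antisymm hij (hlerN _ _ hl)
          subst this; exact hr i
      · intro hl
        exact ⟨hlehN _ _ hl, (hkey i j).mpr (Or.inl hl)⟩
    have hR : ∀ i j, (psi σ).ler i j ↔ D.ler i j := by
      intro i j
      constructor
      · rintro ⟨hij, hs⟩
        rcases (hkey j i).mp hs with hl | hl
        · have : i = j := le_antisymm hij (hlehN _ _ hl)
          subst this; exact hr' i
        · exact hl
      · intro hl
        exact ⟨hlerN _ _ hl, (hkey j i).mpr (Or.inr hl)⟩
    exact PlaneData.ext' hL hR
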